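/- Let n ≥ 1 be such that n(n−1)/2 is even, and let A_n denote the alternating group of even permutations of Fin n. For λ : Fin n → ℝ, define λ† : Fin n → ℝ by λ† i = −λ(n − 1 − i) (negation composed with reversal of the coordinates). Then for all λ, x : Fin n → ℝ, conj(Ê_λ(x)) = Ê_{λ†}(x). In particular, if λ† = λ then Ê_λ is real-valued. -/

import Mathlib

open Equiv Equiv.Perm

lemma sum_div_two_succ (n : ℕ) : n + n * (n - 1) / 2 = (n + 1) * (n + 1 - 1) / 2 := by
  have h : (n + 1) * (n + 1 - 1) = n * (n - 1) + 2 * n := by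
    cases n with
    | zero => rfl
    | succ m =>
      simp only [Nat.add_sub_cancel]
      ring
  rw [h, Nat.add_mul_div_left _ _ (by norm_num : 0 < 2)]
  omega

lemma sign_revPerm_eq (n : ℕ) :
    Equiv.Perm.sign (Fin.revPerm : Equiv.Perm (Fin n)) = (-1) ^ (n * (n - 1) / 2) := by
  induction n with
  | zero => simp [Subsingleton.elim (Fin.revPerm : Equiv.Perm (Fin 0)) 1]
  | succ n ih =>
    have hdecomp : (Fin.revPerm : Equiv.Perm (Fin (n + 1))) =
        finRotate (n + 1) *
          (finSuccEquivLast.symm.permCongr (Fin.revPerm : Equiv.Perm (Fin n)).optionCongr) := by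
      ext i
      refine Fin.lastCases ?_ (fun j => ?_) i
      · simp [Equiv.permCongr_apply, Fin.rev_last, finRotate_last]
      · simp only [Fin.revPerm_apply, Equiv.Perm.mul_apply, Equiv.permCongr_apply,
          Equiv.symm_symm, finSuccEquivLast_castSucc, Equiv.optionCongr_apply,
          Option.map_some, finSuccEquivLast_symm_some, finRotate_succ_apply]
        rw [Fin.rev_castSucc, ← Fin.coeSucc_eq_succ]
    rw [hdecomp, map_mul, sign_finRotate, Equiv.Perm.sign_permCongr,
      Equiv.optionCongr_sign, ih, ← pow_add, Nat.add_sub_cancel, sum_div_two_succ, Nat.add_sub_cancel]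

lemma revPerm_mem_alternating (n : ℕ) (hpar : Even (n * (n - 1) / 2)) :
    (Fin.revPerm : Equiv.Perm (Fin n)) ∈ alternatingGroup (Fin n) := by
  rw [Equiv.Perm.mem_alternatingGroup, sign_revPerm_eq, hpar.neg_one_pow]

/-- The normalized `E`-orbit function
`Ê_λ(x) = ∑_{σ ∈ Aₙ} exp(2πi ∑ᵢ λ(σ⁻¹ i) · x i)`. -/
noncomputable def Ehat (n : ℕ) (lam x : Fin n → ℝ) : ℂ :=
  ∑ σ : alternatingGroup (Fin n),
    Complex.exp (2 * (Real.pi : ℂ) * Complex.I *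
      ((∑ i, lam ((σ : Equiv.Perm (Fin n))⁻¹ i) * x i : ℝ) : ℂ))

/-- If `n(n−1)/2` is even (the cases `A_{4k−1}` and `A_{4k}`), then
`conj (Ê_λ(x)) = Ê_{λ†}(x)` where `λ† i = −λ (n − 1 − i)`; in particular if
`λ† = λ` then `Ê_λ` is real-valued. -/
theorem Ehat_conj_of_even (n : ℕ) (hn : 1 ≤ n) (hpar : Even (n * (n - 1) / 2))
    (lam x : Fin n → ℝ) :
    (starRingEnd ℂ) (Ehat n lam x) = Ehat n (fun i => -lam i.rev) x ∧
      ((fun i : Fin n => -lam i.rev) = lam → ∃ r : ℝ, Ehat n lam x = (r : ℂ)) := by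
  have hw : (Fin.revPerm : Equiv.Perm (Fin n)) ∈ alternatingGroup (Fin n) :=
    revPerm_mem_alternating n hpar
  set w : alternatingGroup (Fin n) := ⟨Fin.revPerm, hw⟩ with hwdef
  have hmain : (starRingEnd ℂ) (Ehat n lam x) = Ehat n (fun i => -lam i.rev) x := by
    unfold Ehat
    rw [map_sum]
    refine Fintype.sum_equiv (Equiv.mulRight w) _ _ (fun σ => ?_)
    rw [← Complex.exp_conj]
    congr 1
    have h1 : ((Equiv.mulRight w σ : alternatingGroup (Fin n)) : Equiv.Perm (Fin n))⁻¹ =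
        Fin.revPerm * ((σ : Equiv.Perm (Fin n)))⁻¹ := by
      have he : ((Equiv.mulRight w σ : alternatingGroup (Fin n)) : Equiv.Perm (Fin n)) =
          (σ : Equiv.Perm (Fin n)) * Fin.revPerm := rfl
      rw [he, mul_inv_rev]
      rfl
    rw [h1]
    simp only [Equiv.Perm.mul_apply, Fin.revPerm_apply, Fin.rev_rev, neg_mul,
      Finset.sum_neg_distrib, map_mul, Complex.conj_I, Complex.conj_ofReal, map_ofNat]
    push_cast
    ring
  refine ⟨hmain, fun hfix => ?_⟩
  have hc : (starRingEnd ℂ) (Ehat n lam x) = Ehat n lam x := by rw [hmain, hfix]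
  exact ⟨(Ehat n lam x).re, (Complex.conj_eq_iff_re.mp hc).symm⟩
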